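/- Solution of the skewness quadratic program: Let J be a d×d real symmetric positive semidefinite matrix, 𝟙 the all-ones vector with 𝟙 ≠ 0, and h a vector, such that both h and 𝟙 lie in the column space of J. Let J⁺ be the Moore–Penrose pseudoinverse of J and J̃ = J⁺ − (J⁺𝟙)(J⁺𝟙)ᵀ/(𝟙ᵀJ⁺𝟙). Then the supremum of ⟨g,h⟩ − (1/2)·gᵀJg over all g ∈ ℝ^d with ⟨g,𝟙⟩ = 0 equals (1/2)·hᵀJ̃h, and it is attained at g* = J̃h. -/

import Mathlib

open Finset

noncomputable section

/-- `Jp` is the Moore–Penrose pseudoinverse of `J`. -/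
def IsPseudoinverse {d : Type*} [Fintype d] (J Jp : Matrix d d ℝ) : Prop :=
  J * Jp * J = J ∧ Jp * J * Jp = Jp ∧ (J * Jp).transpose = J * Jp ∧
    (Jp * J).transpose = Jp * J

/-- `J̃ = J⁺ − (J⁺𝟙)(J⁺𝟙)ᵀ/(𝟙ᵀJ⁺𝟙)`. -/
def Jtilde {d : Type*} [Fintype d] (Jp : Matrix d d ℝ) : Matrix d d ℝ :=
  Jp - Matrix.of fun i j => (∑ a, Jp i a) * (∑ a, Jp j a) / ∑ a, ∑ b, Jp a b

/-- Bilinear form `vᵀ M w`. -/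
def quadForm {d : Type*} [Fintype d] (M : Matrix d d ℝ) (v w : d → ℝ) : ℝ :=
  ∑ i, ∑ j, v i * M i j * w j

open Matrix

/-- Uniqueness of the Moore–Penrose pseudoinverse. -/
lemma pseudoinverse_unique {d : Type*} [Fintype d] (J A B : Matrix d d ℝ)
    (hA : IsPseudoinverse J A) (hB : IsPseudoinverse J B) : A = B := by
  obtain ⟨a1, a2, a3, a4⟩ := hA
  obtain ⟨b1, b2, b3, b4⟩ := hB
  have hJt : Jᵀ = (J * B * J)ᵀ := by rw [b1]
  have hJt' : Jᵀ = (J * A * J)ᵀ := by rw [a1]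
  have e1 : A = A * J * B := by
    calc A = A * J * A := a2.symm
    _ = A * (J * A)ᵀ := by rw [a3, Matrix.mul_assoc]
    _ = A * (Aᵀ * Jᵀ) := by rw [Matrix.transpose_mul]
    _ = A * (Aᵀ * (J * B * J)ᵀ) := by rw [← hJt]
    _ = A * (Aᵀ * (Jᵀ * (J * B)ᵀ)) := by
          rw [Matrix.transpose_mul (J * B) J]
    _ = A * ((J * A)ᵀ * (J * B)ᵀ) := by
          rw [Matrix.transpose_mul J A, Matrix.mul_assoc]
    _ = A * ((J * A) * (J * B)) := by rw [a3, b3]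
    _ = (A * J * A) * (J * B) := by
          simp only [Matrix.mul_assoc]
    _ = A * J * B := by rw [a2, Matrix.mul_assoc]
  have e2 : B = A * J * B := by
    calc B = B * J * B := b2.symm
    _ = (B * J)ᵀ * B := by rw [b4]
    _ = Jᵀ * Bᵀ * B := by rw [Matrix.transpose_mul]
    _ = (J * A * J)ᵀ * Bᵀ * B := by rw [← hJt']
    _ = (A * J)ᵀ * (B * J)ᵀ * B := by
          rw [Matrix.transpose_mul (J * A) J, Matrix.transpose_mul J A]
          simp only [Matrix.transpose_mul, Matrix.mul_assoc]
    _ = (A * J) * ((B * J) * B) := by rw [a4, b4, Matrix.mul_assoc]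
    _ = A * J * B := by rw [b2]
  rw [e1, ← e2]

lemma symm_pair {d : Type*} [Fintype d] (M : Matrix d d ℝ) (hM : Mᵀ = M)
    (x y : d → ℝ) : (M *ᵥ x) ⬝ᵥ y = x ⬝ᵥ (M *ᵥ y) := by
  rw [← Matrix.vecMul_transpose, hM, ← Matrix.dotProduct_mulVec]

/-- solution of the skewness quadratic program: for a real symmetric
positive semidefinite `J` with `h` and `𝟙 ≠ 0` in its column space, the supremum of
`⟨g,h⟩ − (1/2)·gᵀJg` over `g` with `⟨g,𝟙⟩ = 0` equals `(1/2)·hᵀJ̃h` and is attained at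
`g* = J̃h`. -/
theorem skewness_quadratic_program
    {d : ℕ} (J Jp : Matrix (Fin d) (Fin d) ℝ)
    (hsym : J.transpose = J) (hpsd : J.PosSemidef)
    (hone : (fun _ => (1 : ℝ)) ≠ (0 : Fin d → ℝ))
    (h : Fin d → ℝ)
    (hcol : ∃ u : Fin d → ℝ, J.mulVec u = h)
    (honecol : ∃ u : Fin d → ℝ, J.mulVec u = fun _ => (1 : ℝ))
    (hJp : IsPseudoinverse J Jp) :
    -- the maximizer g* = J̃h is feasible: ⟨g*, 𝟙⟩ = 0
    (∑ i, (Jtilde Jp).mulVec h i = 0) ∧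
    -- the optimal value is attained at g* = J̃h
    ((1 / 2) * quadForm (Jtilde Jp) h h
      = (∑ i, (Jtilde Jp).mulVec h i * h i)
        - (1 / 2) * quadForm J ((Jtilde Jp).mulVec h) ((Jtilde Jp).mulVec h)) ∧
    -- and it is the greatest value of the program
    IsGreatest
      {r : ℝ | ∃ g : Fin d → ℝ, (∑ i, g i) = 0 ∧
        r = (∑ i, g i * h i) - (1 / 2) * quadForm J g g}
      ((1 / 2) * quadForm (Jtilde Jp) h h) := by
  obtain ⟨p1, p2, p3, p4⟩ := hJp
  -- Jp is symmetric
  have hJpsym : Jpᵀ = Jp := by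
    refine pseudoinverse_unique J Jpᵀ Jp ?_ ⟨p1, p2, p3, p4⟩
    refine ⟨?_, ?_, ?_, ?_⟩
    · calc J * Jpᵀ * J = (Jᵀ * Jp * Jᵀ)ᵀ := by
            simp [Matrix.transpose_mul, Matrix.mul_assoc]
      _ = J := by rw [hsym, p1, hsym]
    · calc Jpᵀ * J * Jpᵀ = (Jp * Jᵀ * Jp)ᵀ := by
            simp [Matrix.transpose_mul, Matrix.mul_assoc]
      _ = Jpᵀ := by rw [hsym, p2]
    · calc (J * Jpᵀ)ᵀ = Jp * Jᵀ := by simp [Matrix.transpose_mul]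
      _ = (Jp * J)ᵀ := by rw [hsym, p4]
      _ = Jᵀ * Jpᵀ := by simp [Matrix.transpose_mul]
      _ = J * Jpᵀ := by rw [hsym]
    · calc (Jpᵀ * J)ᵀ = Jᵀ * Jp := by simp [Matrix.transpose_mul]
      _ = (J * Jp)ᵀ := by rw [hsym, p3]
      _ = Jpᵀ * Jᵀ := by simp [Matrix.transpose_mul]
      _ = Jpᵀ * J := by rw [hsym]
  set one : Fin d → ℝ := fun _ => (1 : ℝ) with one_def
  set w : Fin d → ℝ := Jp *ᵥ one with w_def
  set c : ℝ := one ⬝ᵥ w with c_def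
  obtain ⟨u, hu⟩ := honecol
  obtain ⟨v, hv⟩ := hcol
  -- J Jp acts as identity on the column space
  have hJJp : ∀ x y : Fin d → ℝ, J *ᵥ x = y → J *ᵥ (Jp *ᵥ y) = y := by
    rintro x y rfl
    rw [Matrix.mulVec_mulVec, Matrix.mulVec_mulVec, p1]
  have hJw : J *ᵥ w = one := hJJp u one hu
  have hJh : J *ᵥ (Jp *ᵥ h) = h := hJJp v h hv
  -- c > 0
  have hc_eq : c = u ⬝ᵥ (J *ᵥ u) := by
    have h1 : c = (J *ᵥ u) ⬝ᵥ (Jp *ᵥ one) := by rw [c_def, w_def, hu]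
    rw [h1, symm_pair J hsym, ← w_def, hJw, hu]
  have hc_pos : 0 < c := by
    have h0 : 0 ≤ c := by rw [hc_eq]; simpa using hpsd.dotProduct_mulVec_nonneg u
    rcases h0.lt_or_eq with hlt | heq
    · exact hlt
    · exfalso
      have hz : u ⬝ᵥ (J *ᵥ u) = 0 := by rw [← hc_eq, ← heq]
      have hz' : J *ᵥ u = 0 := (hpsd.dotProduct_mulVec_zero_iff u).mp (by simpa using hz)
      exact hone (hu ▸ hz')
  have hc_ne : c ≠ 0 := ne_of_gt hc_pos
  -- matrix form of Jtilde
  have hJt : Jtilde Jp = Jp - c⁻¹ • Matrix.vecMulVec w w := by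
    ext i j
    have hwi : ∀ i, (∑ a, Jp i a) = w i := by
      intro i; simp [w_def, Matrix.mulVec, dotProduct, one_def]
    have hcc : (∑ a, ∑ b, Jp a b) = c := by
      simp [c_def, w_def, dotProduct, Matrix.mulVec, one_def]
    have hcw : (∑ x, w x) = c := by
      simp [c_def, dotProduct, one_def]
    simp only [Jtilde, Matrix.sub_apply, Matrix.of_apply, Matrix.smul_apply,
      Matrix.vecMulVec_apply, smul_eq_mul, hwi, hcc, hcw]
    ring
  have hvmv : ∀ x : Fin d → ℝ, Matrix.vecMulVec w w *ᵥ x = (w ⬝ᵥ x) • w := by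
    intro x
    funext i
    simp only [Matrix.mulVec, Matrix.vecMulVec_apply, dotProduct, Pi.smul_apply,
      smul_eq_mul]
    rw [Finset.sum_mul]
    exact Finset.sum_congr rfl fun j _ => by ring
  -- Jtilde is symmetric
  have hJtsym : (Jtilde Jp)ᵀ = Jtilde Jp := by
    rw [hJt]
    ext i j
    have hswap : Jp j i = Jp i j := congrFun (congrFun hJpsym i) j
    simp only [Matrix.transpose_apply, Matrix.sub_apply, Matrix.smul_apply,
      Matrix.vecMulVec_apply, smul_eq_mul, hswap]
    ring
  set g : Fin d → ℝ := (Jtilde Jp) *ᵥ h with g_def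
  have hJtone : Jtilde Jp *ᵥ one = 0 := by
    rw [hJt, Matrix.sub_mulVec, Matrix.smul_mulVec, hvmv,
      dotProduct_comm, ← c_def, smul_smul, inv_mul_cancel₀ hc_ne, one_smul]
    exact sub_self w
  -- feasibility
  have hfeas : one ⬝ᵥ g = 0 := by
    rw [g_def, ← symm_pair _ hJtsym, hJtone, zero_dotProduct]
  have hsum_eq : ∀ x : Fin d → ℝ, (∑ i, x i) = one ⬝ᵥ x := by
    intro x; simp [dotProduct, one_def]
  set lam : ℝ := c⁻¹ * (w ⬝ᵥ h) with lam_def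
  have hJg : J *ᵥ g = h - lam • one := by
    rw [g_def, hJt, Matrix.sub_mulVec, Matrix.smul_mulVec, hvmv,
      Matrix.mulVec_sub, hJh, Matrix.mulVec_smul, Matrix.mulVec_smul, hJw,
      smul_smul, ← lam_def]
  have hquad : ∀ (M : Matrix (Fin d) (Fin d) ℝ) (x y : Fin d → ℝ),
      quadForm M x y = x ⬝ᵥ (M *ᵥ y) := by
    intro M x y
    simp only [quadForm, dotProduct, Matrix.mulVec, Finset.mul_sum]
    exact Finset.sum_congr rfl fun i _ => Finset.sum_congr rfl fun j _ => by ring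
  have hQt : quadForm (Jtilde Jp) h h = h ⬝ᵥ g := by rw [hquad, g_def]
  have hgone : g ⬝ᵥ one = 0 := by rw [dotProduct_comm]; exact hfeas
  have hgJg : quadForm J g g = g ⬝ᵥ h := by
    rw [hquad, hJg, dotProduct_sub, dotProduct_smul, smul_eq_mul, hgone,
      mul_zero, sub_zero]
  have hhg : h ⬝ᵥ g = g ⬝ᵥ h := dotProduct_comm _ _
  have hsumgh : (∑ i, g i * h i) = g ⬝ᵥ h := rfl
  refine ⟨?_, ?_, ?_, ?_⟩
  · rw [hsum_eq]; exact hfeas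
  · rw [hQt, hsumgh, hgJg, hhg]; ring
  · exact ⟨g, by rw [hsum_eq]; exact hfeas, by rw [hQt, hsumgh, hgJg, hhg]; ring⟩
  · rintro r ⟨g', hfeas', rfl⟩
    have hone_g' : one ⬝ᵥ g' = 0 := by rw [← hsum_eq]; exact hfeas'
    have hg'one : g' ⬝ᵥ one = 0 := by rw [dotProduct_comm]; exact hone_g'
    have key : 0 ≤ (g' - g) ⬝ᵥ (J *ᵥ (g' - g)) := by simpa using hpsd.dotProduct_mulVec_nonneg (g' - g)
    have hg'Jg : g' ⬝ᵥ (J *ᵥ g) = g' ⬝ᵥ h := by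
      rw [hJg, dotProduct_sub, dotProduct_smul, smul_eq_mul, hg'one, mul_zero,
        sub_zero]
    have hgJg' : g ⬝ᵥ (J *ᵥ g') = g' ⬝ᵥ h := by
      rw [← symm_pair J hsym, hJg, sub_dotProduct, smul_dotProduct, smul_eq_mul,
        hone_g', mul_zero, sub_zero, dotProduct_comm]
    have hgJg2 : g ⬝ᵥ (J *ᵥ g) = g ⬝ᵥ h := by rw [← hquad]; exact hgJg
    have expand : (g' - g) ⬝ᵥ (J *ᵥ (g' - g))
        = g' ⬝ᵥ (J *ᵥ g') - 2 * (g' ⬝ᵥ h) + g ⬝ᵥ h := by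
      rw [Matrix.mulVec_sub, dotProduct_sub, sub_dotProduct, sub_dotProduct,
        hg'Jg, hgJg', hgJg2]
      ring
    show (∑ i, g' i * h i) - 1 / 2 * quadForm J g' g'
        ≤ 1 / 2 * quadForm (Jtilde Jp) h h
    have hs' : (∑ i, g' i * h i) = g' ⬝ᵥ h := rfl
    have hq' : quadForm J g' g' = g' ⬝ᵥ (J *ᵥ g') := hquad _ _ _
    rw [hs', hq', hQt, hhg]
    nlinarith [key, expand]
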